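/- Constant-shift solutions (Theorem on σ, ε): let e^1,...,e^n be generators of Cl_{p,q} (constant, n = p+q ≥ 2) and σ ∈ ℝ. Define the constant fields B_μ := σ e_μ (identifying spacetime indices with Clifford indices, e_μ := η_{μν}e^ν) and F_{μν} := −σ²[e_μ, e_ν]. Then ∂_μ B_ν − ∂_ν B_μ − [B_μ, B_ν] = F_{μν} and Σ_μ(∂_μ F^{μν} − [B_μ, F^{μν}]) = ε e^ν with ε = 4(n−1)σ³. -/
import Mathlib


/-- Partial derivative in the μ-th coordinate direction. -/
noncomputable def pdv {m : ℕ} {A : Type*} [NormedAddCommGroup A] [NormedSpace ℝ A]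
    (μ : Fin m) (f : (Fin m → ℝ) → A) (x : Fin m → ℝ) : A :=
  fderiv ℝ f x (Pi.single μ 1)

/-- The partial derivative of a constant field vanishes. -/
theorem pdv_const {m : ℕ} {A : Type*} [NormedAddCommGroup A] [NormedSpace ℝ A]
    (μ : Fin m) (c : A) (x : Fin m → ℝ) : pdv μ (fun _ => c) x = 0 := by
  simp [pdv]

/-- Key algebraic lemma for a single summand of the Yang-Mills current. -/
theorem key_term {A : Type*} [Ring A] [Module ℝ A] [IsScalarTower ℝ A A]
    [SMulCommClass ℝ A A]
    (a b : A) (hm hv σ : ℝ) (hm2 : hm = 1 ∨ hm = -1) (hv2 : hv = 1 ∨ hv = -1)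
    (haa : a * a = hm • 1) (hab : a * b = -(b * a)) :
    (hm * hv) • ((0 : A) - ((σ • (hm • a)) * ((-(σ ^ 2)) • ((hm • a) * (hv • b) - (hv • b) * (hm • a)))
      - ((-(σ ^ 2)) • ((hm • a) * (hv • b) - (hv • b) * (hm • a))) * (σ • (hm • a))))
      = (4 * σ ^ 3) • b := by
  have h1 : a * (a * b) = hm • b := by rw [← mul_assoc, haa, smul_mul_assoc, one_mul]
  have h2 : a * (b * a) = (-hm) • b := by
    rw [← mul_assoc, hab, neg_mul, mul_assoc, haa, mul_smul_comm, mul_one, ← neg_smul]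
  have h3 : a * b * a = (-hm) • b := by rw [mul_assoc, h2]
  have h4 : b * a * a = hm • b := by rw [mul_assoc, haa, mul_smul_comm, mul_one]
  simp only [smul_mul_assoc, mul_smul_comm, smul_sub, sub_mul, mul_sub, smul_smul, h1, h2, h3, h4]
  rcases hm2 with h | h <;> rcases hv2 with h' | h' <;> subst h <;> subst h' <;>
    match_scalars <;> ring

/-- the constant fields B_μ = σ e_μ, F_{μν} = −σ²[e_μ, e_ν] solve the
Yang-Mills equations with current ε e^ν, ε = 4(n−1)σ³. -/
theorem constant_shift_yang_mills_solution {p q : ℕ} (hn : 2 ≤ p + q)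
    {A : Type*} [NormedRing A] [NormedAlgebra ℝ A]
    (η : Fin (p + q) → ℝ) (hη : ∀ a, η a = if (a : ℕ) < p then 1 else -1)
    (e : Fin (p + q) → A)
    (hrel : ∀ a b, e a * e b + e b * e a = (2 * if a = b then η a else 0) • (1 : A))
    (σ : ℝ)
    (B : Fin (p + q) → (Fin (p + q) → ℝ) → A)
    (hB : ∀ μ, B μ = fun _ => σ • (η μ • e μ))
    (F : Fin (p + q) → Fin (p + q) → (Fin (p + q) → ℝ) → A)
    (hF : ∀ μ ν, F μ ν = fun _ => (-(σ ^ 2)) •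
        ((η μ • e μ) * (η ν • e ν) - (η ν • e ν) * (η μ • e μ))) :
    (∀ μ ν x, pdv μ (B ν) x - pdv ν (B μ) x
        - (B μ x * B ν x - B ν x * B μ x) = F μ ν x) ∧
    (∀ ν x, ∑ μ, (η μ * η ν) •
        (pdv μ (F μ ν) x - (B μ x * F μ ν x - F μ ν x * B μ x))
      = (4 * (((p + q : ℕ) : ℝ) - 1) * σ ^ 3) • e ν) := by
  have hηpm : ∀ a, η a = 1 ∨ η a = -1 := by
    intro a; rw [hη a]; split_ifs <;> simp
  have haa : ∀ a, e a * e a = η a • (1 : A) := by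
    intro a
    have := hrel a a
    simp only [eq_self_iff_true, if_true] at this
    have h2 : (2 : ℝ) • (e a * e a) = (2 : ℝ) • (η a • (1 : A)) := by
      rw [two_smul, smul_smul] at *
      linear_combination (norm := module) this
    exact smul_right_injective A two_ne_zero h2
  have hab : ∀ a b, a ≠ b → e a * e b = -(e b * e a) := by
    intro a b h
    have := hrel a b
    rw [if_neg h] at this
    simp only [mul_zero, zero_smul] at this
    exact eq_neg_of_add_eq_zero_left this
  constructor
  · intro μ ν x
    rw [hB, hB, hF]
    simp only [pdv_const, sub_zero, zero_sub]
    simp only [smul_mul_smul_comm, smul_sub]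
    module
  · intro ν x
    have hterm : ∀ μ, (η μ * η ν) •
        (pdv μ (F μ ν) x - (B μ x * F μ ν x - F μ ν x * B μ x))
        = if μ = ν then 0 else (4 * σ ^ 3) • e ν := by
      intro μ
      rw [hB, hF, pdv_const]
      split_ifs with h
      · subst h
        simp
      · exact key_term (e μ) (e ν) (η μ) (η ν) σ (hηpm μ) (hηpm ν) (haa μ) (hab μ ν h)
    rw [Finset.sum_congr rfl fun μ _ => hterm μ]
    rw [Finset.sum_ite, Finset.sum_const_zero, zero_add, Finset.sum_const]
    have hcard : (Finset.univ.filter fun μ : Fin (p + q) => ¬ μ = ν).card = p + q - 1 := by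
      have : (Finset.univ.filter fun μ : Fin (p + q) => ¬ μ = ν) = Finset.univ.erase ν := by
        ext μ; simp [Finset.mem_erase, and_comm]
      rw [this, Finset.card_erase_of_mem (Finset.mem_univ ν), Finset.card_univ, Fintype.card_fin]
    rw [hcard, ← Nat.cast_smul_eq_nsmul ℝ, smul_smul]
    congr 1
    have h1 : 1 ≤ p + q := by omega
    push_cast [h1]
    ring
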